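/- Define the lower-bound function LB(τ) = (1 − p₀) R^{−κτT/ε} M(τ)² + p₀ e^{−κτ} R^{κτT/ε} (ε − M(τ))², where R = Z_T(δ_min)/Z_T(δ_max) and M(τ) is the average-work function. Then lim_{τ → 0⁺} LB(τ) = p₀ (1 − p₀) ε², which equals the variance of work for the adiabatic process; hence the variance lower bound is saturated in the adiabatic limit. -/

import Mathlib

open Set Filter

/-- `G_τ(u) = -∑_{n=1}^∞ (-exp(-u/T))^n / (nε/(κτT) + 1)`. -/
noncomputable def Gser (T ε κ τ u : ℝ) : ℝ :=
  -∑' n : ℕ, (-Real.exp (-u / T)) ^ (n + 1) / ((n + 1 : ℝ) * ε / (κ * τ * T) + 1)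

/-- The average-work function `M(τ)`. -/
noncomputable def Mavg (T δmin δmax κ p₀ τ : ℝ) : ℝ :=
  T * Real.log ((1 + Real.exp (-δmin / T)) / (1 + Real.exp (-δmax / T)))
    + (δmax - δmin) * p₀ / (κ * τ) * (1 - Real.exp (-κ * τ))
    - (δmax - δmin) / (κ * τ) *
        (Gser T (δmax - δmin) κ τ δmin - Real.exp (-κ * τ) * Gser T (δmax - δmin) κ τ δmax)

/-- The variance lower-bound function
`LB(τ) = (1 − p₀) R^{−κτT/ε} M(τ)² + p₀ e^{−κτ} R^{κτT/ε} (ε − M(τ))²`,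
with `R = Z(δmin)/Z(δmax)`, `Z(δ) = 1 + exp(−δ/T)`, `ε = δmax − δmin`;
real exponents use the real power function. -/
noncomputable def LB (T δmin δmax κ p₀ τ : ℝ) : ℝ :=
  (1 - p₀) * ((1 + Real.exp (-δmin / T)) / (1 + Real.exp (-δmax / T))) ^
      (-(κ * τ * T / (δmax - δmin))) * (Mavg T δmin δmax κ p₀ τ) ^ 2
  + p₀ * Real.exp (-κ * τ) *
      ((1 + Real.exp (-δmin / T)) / (1 + Real.exp (-δmax / T))) ^
        (κ * τ * T / (δmax - δmin)) *
      ((δmax - δmin) - Mavg T δmin δmax κ p₀ τ) ^ 2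

lemma aux_cont (f : ℝ → ℝ) (hf : Continuous f) :
    Tendsto f (nhdsWithin 0 (Ioi 0)) (nhds (f 0)) :=
  (hf.tendsto 0).mono_left nhdsWithin_le_nhds

lemma aux_slope (κ : ℝ) (hκ : 0 < κ) :
    Tendsto (fun τ => (1 - Real.exp (-κ * τ)) / (κ * τ)) (nhdsWithin 0 (Ioi 0)) (nhds 1) := by
  have h0 : Tendsto (slope Real.exp 0) (nhdsWithin 0 {(0:ℝ)}ᶜ) (nhds 1) := by
    have := (Real.hasDerivAt_exp 0)
    rw [hasDerivAt_iff_tendsto_slope] at this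
    simpa using this
  have hm : Tendsto (fun τ : ℝ => -κ * τ) (nhdsWithin 0 (Ioi 0)) (nhdsWithin 0 {(0:ℝ)}ᶜ) := by
    rw [tendsto_nhdsWithin_iff]
    constructor
    · have : Tendsto (fun τ : ℝ => -κ * τ) (nhds 0) (nhds (-κ * 0)) :=
        (continuous_const.mul continuous_id).tendsto 0
      simpa using this.mono_left nhdsWithin_le_nhds
    · filter_upwards [self_mem_nhdsWithin] with τ (hτ : 0 < τ)
      simp only [Set.mem_compl_iff, Set.mem_singleton_iff]
      nlinarith
  have := h0.comp hm
  refine this.congr fun τ => ?_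
  simp only [Function.comp, slope_def_field]
  rw [Real.exp_zero, sub_zero, show -κ * τ = -(κ*τ) by ring, div_neg, ← neg_div, neg_sub]

lemma aux_G (T ε κ u : ℝ) (hT : 0 < T) (hε : 0 < ε) (hκ : 0 < κ) (hu : 0 < u) :
    Tendsto (fun τ => ε / (κ * τ) * Gser T ε κ τ u) (nhdsWithin 0 (Ioi 0))
      (nhds (T * Real.log (1 + Real.exp (-u / T)))) := by
  set y : ℝ := Real.exp (-u / T) with hy
  have hy0 : 0 < y := Real.exp_pos _
  have hy1 : y < 1 := by
    rw [hy, Real.exp_lt_one_iff]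
    have : 0 < u / T := div_pos hu hT
    rw [neg_div]
    linarith
  set f : ℝ → ℕ → ℝ := fun τ n => -((-y) ^ (n + 1) * (T / ((n + 1 : ℝ) + κ * τ * T / ε)))
  set g : ℕ → ℝ := fun n => -((-y) ^ (n + 1) * (T / (n + 1 : ℝ)))
  have hgsum : HasSum g (T * Real.log (1 + y)) := by
    have h1 : HasSum (fun n : ℕ => (-y) ^ (n + 1) / (n + 1 : ℝ)) (-Real.log (1 - -y)) :=
      Real.hasSum_pow_div_log_of_abs_lt_one (by rw [abs_neg, abs_of_pos hy0]; exact hy1)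
    have h2 := h1.mul_left (-T)
    have : (-T) * -Real.log (1 - -y) = T * Real.log (1 + y) := by rw [sub_neg_eq_add]; ring
    rw [this] at h2
    refine h2.congr_fun fun n => ?_
    simp only [g]; ring
  have key : Tendsto (fun τ => ∑' n, f τ n) (nhdsWithin 0 (Ioi 0)) (nhds (∑' n, g n)) := by
    apply tendsto_tsum_of_dominated_convergence
      (bound := fun n : ℕ => (T * y) * y ^ n)
    · exact (summable_geometric_of_lt_one hy0.le hy1).mul_left _
    · intro k
      have hden : Tendsto (fun τ : ℝ => (k + 1 : ℝ) + κ * τ * T / ε)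
          (nhdsWithin 0 (Ioi 0)) (nhds (k + 1 : ℝ)) := by
        have := aux_cont (fun τ : ℝ => (k + 1 : ℝ) + κ * τ * T / ε) (by continuity)
        simpa using this
      have hne : ((k : ℝ) + 1) ≠ 0 := by positivity
      have := ((tendsto_const_nhds (x := T)).div hden hne).const_mul ((-y) ^ (k + 1))
      exact this.neg
    · filter_upwards [self_mem_nhdsWithin] with τ (hτ : 0 < τ)
      intro n
      have hdpos : (0 : ℝ) < (n + 1 : ℝ) + κ * τ * T / ε := by positivity
      have hd1 : (1 : ℝ) ≤ (n + 1 : ℝ) + κ * τ * T / ε := by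
        have : (0:ℝ) ≤ κ * τ * T / ε := by positivity
        have h1n : (1:ℝ) ≤ (n+1:ℝ) := by
          have : (0:ℝ) ≤ (n:ℝ) := Nat.cast_nonneg n
          linarith
        linarith
      have habs : |f τ n| = y ^ (n + 1) * (T / ((n + 1 : ℝ) + κ * τ * T / ε)) := by
        rw [show f τ n = -((-y) ^ (n + 1) * (T / ((n + 1 : ℝ) + κ * τ * T / ε))) from rfl,
          abs_neg, abs_mul, abs_pow, abs_neg, abs_of_pos hy0,
          abs_of_pos (div_pos hT hdpos)]
      rw [Real.norm_eq_abs, habs]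
      calc y ^ (n + 1) * (T / ((n + 1 : ℝ) + κ * τ * T / ε))
          ≤ y ^ (n + 1) * T := by
            gcongr
            exact div_le_self hT.le hd1
        _ = T * y * y ^ n := by rw [pow_succ]; ring
  rw [hgsum.tsum_eq] at key
  refine key.congr' ?_
  filter_upwards [self_mem_nhdsWithin] with τ (hτ : 0 < τ)
  rw [Gser, mul_neg, ← neg_mul, ← tsum_mul_left]
  refine tsum_congr fun n => ?_
  have h1 : κ * τ ≠ 0 := by positivity
  have h2 : κ * τ * T ≠ 0 := by positivity
  have h3 : (n + 1 : ℝ) * ε / (κ * τ * T) + 1 ≠ 0 := by positivity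
  have h4 : (n + 1 : ℝ) + κ * τ * T / ε ≠ 0 := by positivity
  simp only [f]
  rw [← hy]
  field_simp

lemma aux_M (T δmin δmax κ p₀ : ℝ)
    (hT : 0 < T) (hmin : 0 < δmin) (hlt : δmin < δmax) (hκ : 0 < κ) :
    Tendsto (fun τ => Mavg T δmin δmax κ p₀ τ) (nhdsWithin 0 (Ioi 0))
      (nhds (p₀ * (δmax - δmin))) := by
  set ε := δmax - δmin with hεdef
  have hε : 0 < ε := by simp [hεdef]; linarith
  have hG1 := aux_G T ε κ δmin hT hε hκ hmin
  have hG2 := aux_G T ε κ δmax hT hε hκ (by linarith)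
  have hE : Tendsto (fun τ : ℝ => Real.exp (-κ * τ)) (nhdsWithin 0 (Ioi 0)) (nhds 1) := by
    have := aux_cont (fun τ : ℝ => Real.exp (-κ * τ)) (by continuity)
    simpa using this
  have hS := (aux_slope κ hκ).const_mul (ε * p₀)
  set C : ℝ := T * Real.log ((1 + Real.exp (-δmin / T)) / (1 + Real.exp (-δmax / T)))
  have hcomb : Tendsto
      (fun τ => C + ε * p₀ * ((1 - Real.exp (-κ * τ)) / (κ * τ))
        - (ε / (κ * τ) * Gser T ε κ τ δmin
            - Real.exp (-κ * τ) * (ε / (κ * τ) * Gser T ε κ τ δmax)))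
      (nhdsWithin 0 (Ioi 0))
      (nhds (C + ε * p₀ * 1
        - (T * Real.log (1 + Real.exp (-δmin / T))
            - 1 * (T * Real.log (1 + Real.exp (-δmax / T)))))) :=
    (tendsto_const_nhds.add hS).sub (hG1.sub (hE.mul hG2))
  have hval : C + ε * p₀ * 1
      - (T * Real.log (1 + Real.exp (-δmin / T))
          - 1 * (T * Real.log (1 + Real.exp (-δmax / T)))) = p₀ * ε := by
    have h1 : (0:ℝ) < 1 + Real.exp (-δmin / T) := by positivity
    have h2 : (0:ℝ) < 1 + Real.exp (-δmax / T) := by positivity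
    have : C = T * (Real.log (1 + Real.exp (-δmin / T)) - Real.log (1 + Real.exp (-δmax / T))) := by
      simp only [C]; rw [Real.log_div h1.ne' h2.ne']
    rw [this]; ring
  rw [hval] at hcomb
  refine hcomb.congr' ?_
  filter_upwards [self_mem_nhdsWithin] with τ (hτ : 0 < τ)
  have h1 : κ * τ ≠ 0 := by positivity
  rw [Mavg]
  simp only [C, hεdef]
  field_simp

/-- `LB(τ) → p₀ (1 − p₀) ε²` as `τ → 0⁺`, the variance of the
adiabatic work distribution: the lower bound is saturated in the adiabatic limit. -/
theorem stmt11 (T δmin δmax κ p₀ : ℝ)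
    (hT : 0 < T) (hmin : 0 < δmin) (hlt : δmin < δmax) (hκ : 0 < κ)
    (hp₀ : p₀ ∈ Icc (0 : ℝ) 1) :
    Tendsto (fun τ => LB T δmin δmax κ p₀ τ) (nhdsWithin 0 (Ioi 0))
      (nhds (p₀ * (1 - p₀) * (δmax - δmin) ^ 2)) := by
  set R : ℝ := (1 + Real.exp (-δmin / T)) / (1 + Real.exp (-δmax / T)) with hRdef
  have hR : 0 < R := by positivity
  have hM := aux_M T δmin δmax κ p₀ hT hmin hlt hκ
  have hE : Tendsto (fun τ : ℝ => Real.exp (-κ * τ)) (nhdsWithin 0 (Ioi 0)) (nhds 1) := by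
    have := aux_cont (fun τ : ℝ => Real.exp (-κ * τ)) (by continuity)
    simpa using this
  have hrpow : ∀ c : ℝ, Tendsto (fun τ : ℝ => R ^ (c * τ)) (nhdsWithin 0 (Ioi 0)) (nhds 1) := by
    intro c
    have heq : (fun τ : ℝ => R ^ (c * τ)) = fun τ : ℝ => Real.exp (Real.log R * (c * τ)) := by
      funext τ; rw [Real.rpow_def_of_pos hR]
    rw [heq]
    have := aux_cont (fun τ : ℝ => Real.exp (Real.log R * (c * τ))) (by continuity)
    simpa using this
  have hA : Tendsto (fun τ : ℝ => R ^ (-(κ * τ * T / (δmax - δmin))))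
      (nhdsWithin 0 (Ioi 0)) (nhds 1) := by
    have := hrpow (-(κ * T / (δmax - δmin)))
    refine this.congr fun τ => ?_
    congr 1; ring
  have hB : Tendsto (fun τ : ℝ => R ^ (κ * τ * T / (δmax - δmin)))
      (nhdsWithin 0 (Ioi 0)) (nhds 1) := by
    have := hrpow (κ * T / (δmax - δmin))
    refine this.congr fun τ => ?_
    congr 1; ring
  have hLB : Tendsto (fun τ => LB T δmin δmax κ p₀ τ) (nhdsWithin 0 (Ioi 0))
      (nhds ((1 - p₀) * 1 * (p₀ * (δmax - δmin)) ^ 2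
        + p₀ * 1 * 1 * ((δmax - δmin) - p₀ * (δmax - δmin)) ^ 2)) := by
    exact (((tendsto_const_nhds (x := 1 - p₀)).mul hA).mul (hM.pow 2)).add
      ((((tendsto_const_nhds (x := p₀)).mul hE).mul hB).mul
        ((tendsto_const_nhds.sub hM).pow 2))
  convert hLB using 2
  ring
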